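/- Let a ∈ Λ^3(ℤ^b) and define K(a)_{2n+1} = a^{∘n} (the n-th insertion power), with a^{∘1} = a. Then K(a) is a twisting sequence on the exterior algebra Λ*(ℤ^b) with zero differential: for every n ≥ 2, Σ_{i+j=n, i,j≥1} a^{∘i} ∧ a^{∘j} = 0 in Λ^{2n+2}(ℤ^b). -/

import Mathlib

open scoped Classical

/-- The exterior algebra `Λ*(ℤ^b)` (with zero differential), via coefficients on basis
monomials. -/
abbrev Exterior (b : ℕ) : Type := Finset (Fin b) → ℤ

/-- The basis monomial `e^I`. -/
def eMono {b : ℕ} (I : Finset (Fin b)) : Exterior b := fun S => if S = I then 1 else 0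

/-- Number of inversions between `A` and `B`. -/
def invBetween {b : ℕ} (A B : Finset (Fin b)) : ℕ :=
  ∑ x ∈ A, (B.filter fun y => y < x).card

/-- The exterior (wedge) product. -/
def wedge {b : ℕ} (f g : Exterior b) : Exterior b := fun S =>
  ∑ A ∈ S.powerset, (-1 : ℤ) ^ invBetween A (S \ A) * f A * g (S \ A)

/-- First insertion (cup-1 of monomials): if `|I ∩ J| = 1` with `I = I_0 < I∩J < I_1`,
this is `e^{I_0} ∧ e^J ∧ e^{I_1}`, else `0`. -/
noncomputable def ins2 {b : ℕ} (I J : Finset (Fin b)) : Exterior b :=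
  if h : (I ∩ J).card = 1 then
    let j := (I ∩ J).min' (Finset.card_pos.mp (by omega))
    wedge (wedge (eMono (I.filter fun x => x < j)) (eMono J))
      (eMono (I.filter fun x => j < x))
  else 0

/-- Insert the monomial `e^K` into an arbitrary element. -/
noncomputable def insMono {b : ℕ} (x : Exterior b) (K : Finset (Fin b)) : Exterior b :=
  ∑ S : Finset (Fin b), x S • ins2 S K

/-- Greedy evaluation of the insertion product of a 1-regular family: repeatedly insert a
remaining set meeting the current union in exactly one point (the value is independent of
the choices; for non-1-regular families the process fails, yielding `0`). -/
noncomputable def greedyGo {b : ℕ} :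
    ℕ → Exterior b → Finset (Fin b) → List (Finset (Fin b)) → Exterior b
  | 0, x, _, rem => if rem.isEmpty then x else 0
  | fuel + 1, x, U, rem =>
    if rem.isEmpty then x
    else
      match rem.find? (fun K => (U ∩ K).card == 1) with
      | none => 0
      | some K => greedyGo fuel (insMono x K) (U ∪ K) (rem.erase K)

/-- The insertion product `j_m(e^{I_1},…,e^{I_m})` of a family of subsets. -/
noncomputable def jFam {b : ℕ} : List (Finset (Fin b)) → Exterior b
  | [] => 0
  | I :: rest => greedyGo rest.length (eMono I) I rest

/-- A linear-order code on subsets. -/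
def subsetCode {b : ℕ} (I : Finset (Fin b)) : ℕ := ∑ x ∈ I, 2 ^ (x : ℕ)

/-- The `m`-th insertion power
`a^{∘m} = ∑_{{I_1,…,I_m} 1-regular} a_{I_1}⋯a_{I_m} j_m(e^{I_1},…,e^{I_m})`, the sum
over unordered families realized as the sum over strictly increasing tuples. -/
noncomputable def apow {b : ℕ} (a : Exterior b) (m : ℕ) : Exterior b :=
  ∑ I ∈ Finset.univ.filter
      (fun I : Fin m → Finset (Fin b) => StrictMono fun k => subsetCode (I k)),
    (∏ k : Fin m, a (I k)) • jFam (List.ofFn I)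

/-- `f` is supported on sets whose cardinality is `≡ p (mod 2)`. -/
def PSupp {b : ℕ} (f : Exterior b) (p : ℕ) : Prop :=
  ∀ S : Finset (Fin b), f S ≠ 0 → S.card % 2 = p % 2

lemma psupp_zero {b : ℕ} (p : ℕ) : PSupp (0 : Exterior b) p := by
  intro S hS; simp at hS

lemma psupp_sum {b : ℕ} {ι : Type*} {s : Finset ι} {g : ι → Exterior b} {p : ℕ}
    (h : ∀ i ∈ s, PSupp (g i) p) : PSupp (∑ i ∈ s, g i) p := by
  intro S hS
  rw [Finset.sum_apply] at hS
  obtain ⟨i, hi, hne⟩ := Finset.exists_ne_zero_of_sum_ne_zero hS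
  exact h i hi S hne

lemma psupp_smul {b : ℕ} {f : Exterior b} {p : ℕ} (c : ℤ) (h : PSupp f p) :
    PSupp (c • f) p := by
  intro S hS
  apply h S
  intro h0
  apply hS
  simp [Pi.smul_apply, h0]

lemma psupp_eMono {b : ℕ} (I : Finset (Fin b)) : PSupp (eMono I) I.card := by
  intro S hS
  have : S = I := by by_contra h; simp [eMono, h] at hS
  rw [this]

lemma invBetween_add {b : ℕ} {A B : Finset (Fin b)} (h : Disjoint A B) :
    invBetween A B + invBetween B A = A.card * B.card := by
  unfold invBetween
  simp only [Finset.card_filter]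
  rw [Finset.sum_comm (s := B) (t := A)]
  rw [← Finset.sum_add_distrib]
  have : ∀ x ∈ A, ((∑ y ∈ B, if y < x then 1 else 0) + ∑ y ∈ B, if x < y then 1 else 0)
      = B.card := by
    intro x hx
    rw [← Finset.sum_add_distrib]
    rw [Finset.card_eq_sum_ones]
    apply Finset.sum_congr rfl
    intro y hy
    have hxy : x ≠ y := by
      intro h'; subst h'; exact (Finset.disjoint_left.mp h hx) hy
    rcases lt_or_gt_of_ne hxy with h' | h'
    · simp [h', not_lt_of_gt h']
    · simp [h', not_lt_of_gt h']
  rw [Finset.sum_congr rfl this, Finset.sum_const, smul_eq_mul]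

lemma psupp_wedge {b : ℕ} {f g : Exterior b} {p q : ℕ}
    (hf : PSupp f p) (hg : PSupp g q) : PSupp (wedge f g) (p + q) := by
  intro S hS
  unfold wedge at hS
  obtain ⟨A, hA, hne⟩ := Finset.exists_ne_zero_of_sum_ne_zero hS
  have hAS : A ⊆ S := Finset.mem_powerset.mp hA
  have hfA : f A ≠ 0 := by intro h0; apply hne; simp [h0]
  have hgB : g (S \ A) ≠ 0 := by intro h0; apply hne; simp [h0]
  have h1 := hf A hfA
  have h2 := hg (S \ A) hgB
  have h3 : (S \ A).card + A.card = S.card := Finset.card_sdiff_add_card_eq_card hAS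
  omega

/-- Graded anticommutativity for odd-supported elements. -/
lemma wedge_anticomm {b : ℕ} {f g : Exterior b}
    (hf : PSupp f 1) (hg : PSupp g 1) : wedge f g = - wedge g f := by
  funext S
  show wedge f g S = - wedge g f S
  unfold wedge
  rw [← Finset.sum_neg_distrib]
  refine Finset.sum_nbij' (fun A => S \ A) (fun A => S \ A) ?_ ?_ ?_ ?_ ?_
  · intro A hA; exact Finset.mem_powerset.mpr (Finset.sdiff_subset)
  · intro A hA; exact Finset.mem_powerset.mpr (Finset.sdiff_subset)
  · intro A hA; exact Finset.sdiff_sdiff_eq_self (Finset.mem_powerset.mp hA)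
  · intro A hA; exact Finset.sdiff_sdiff_eq_self (Finset.mem_powerset.mp hA)
  · intro A hA
    have hAS : A ⊆ S := Finset.mem_powerset.mp hA
    have hrw : S \ (S \ A) = A := Finset.sdiff_sdiff_eq_self hAS
    rw [hrw]
    by_cases hfA : f A = 0
    · simp [hfA]
    by_cases hgB : g (S \ A) = 0
    · simp [hgB]
    have h1 := hf A hfA
    have h2 := hg (S \ A) hgB
    have hdisj : Disjoint A (S \ A) := Finset.disjoint_sdiff
    have hadd := invBetween_add hdisj
    have hodd : Odd (invBetween A (S \ A) + invBetween (S \ A) A) := by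
      rw [hadd, Nat.odd_iff, Nat.mul_mod, h1, h2]
    have hprod : (-1 : ℤ) ^ invBetween A (S \ A) * (-1) ^ invBetween (S \ A) A = -1 := by
      rw [← pow_add]; exact Odd.neg_one_pow hodd
    have hsq : (-1 : ℤ) ^ invBetween (S \ A) A * (-1) ^ invBetween (S \ A) A = 1 := by
      rw [← pow_add]; exact Even.neg_one_pow ⟨invBetween (S \ A) A, rfl⟩
    have hie : (-1 : ℤ) ^ invBetween A (S \ A) = - (-1) ^ invBetween (S \ A) A := by
      linear_combination (-1 : ℤ) ^ invBetween (S \ A) A * hprod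
        - (-1 : ℤ) ^ invBetween A (S \ A) * hsq
    rw [hie]; ring

lemma psupp_ins2 {b : ℕ} {S K : Finset (Fin b)} {p : ℕ}
    (hS : S.card % 2 = p % 2) (hK : K.card = 3) : PSupp (ins2 S K) p := by
  by_cases hc : (S ∩ K).card = 1
  · have hmem : (S ∩ K).min' (Finset.card_pos.mp (by omega)) ∈ S ∩ K :=
      Finset.min'_mem _ _
    set j := (S ∩ K).min' (Finset.card_pos.mp (by omega)) with hj
    have hjS : j ∈ S := (Finset.mem_inter.mp hmem).1
    have hsplit : (S.filter fun x => x < j).card + (S.filter fun x => j < x).card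
        = S.card - 1 := by
      have hdisj : Disjoint (S.filter fun x => x < j) (S.filter fun x => j < x) := by
        rw [Finset.disjoint_left]
        intro x hx hx'
        have h1 := (Finset.mem_filter.mp hx).2
        have h2 := (Finset.mem_filter.mp hx').2
        exact absurd (h1.trans h2) (lt_irrefl x)
      have hunion : (S.filter fun x => x < j) ∪ (S.filter fun x => j < x) = S.erase j := by
        ext x
        simp only [Finset.mem_union, Finset.mem_filter, Finset.mem_erase]
        constructor
        · rintro (⟨hxS, h⟩ | ⟨hxS, h⟩)
          · exact ⟨ne_of_lt h, hxS⟩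
          · exact ⟨(ne_of_lt h).symm, hxS⟩
        · rintro ⟨hne, hxS⟩
          rcases lt_or_gt_of_ne hne with h | h
          · exact Or.inl ⟨hxS, h⟩
          · exact Or.inr ⟨hxS, h⟩
      rw [← Finset.card_union_of_disjoint hdisj, hunion, Finset.card_erase_of_mem hjS]
    have hSpos : 1 ≤ S.card := Finset.card_pos.mpr ⟨j, hjS⟩
    have key : PSupp (wedge (wedge (eMono (S.filter fun x => x < j)) (eMono K))
        (eMono (S.filter fun x => j < x)))
        ((S.filter fun x => x < j).card + K.card + (S.filter fun x => j < x).card) :=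
      psupp_wedge (psupp_wedge (psupp_eMono _) (psupp_eMono _)) (psupp_eMono _)
    have heq : ins2 S K = wedge (wedge (eMono (S.filter fun x => x < j)) (eMono K))
        (eMono (S.filter fun x => j < x)) := by
      rw [ins2, dif_pos hc]
    rw [heq]
    intro T hT
    have := key T hT
    omega
  · rw [ins2, dif_neg hc]
    exact psupp_zero p

lemma psupp_insMono {b : ℕ} {x : Exterior b} {K : Finset (Fin b)} {p : ℕ}
    (hx : PSupp x p) (hK : K.card = 3) : PSupp (insMono x K) p := by
  unfold insMono
  apply psupp_sum
  intro S _
  by_cases hS : x S = 0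
  · rw [hS, zero_smul]; exact psupp_zero p
  · exact psupp_smul _ (psupp_ins2 (hx S hS) hK)

lemma psupp_greedyGo {b : ℕ} (p : ℕ) :
    ∀ (fuel : ℕ) (x : Exterior b) (U : Finset (Fin b)) (rem : List (Finset (Fin b))),
    PSupp x p → (∀ K ∈ rem, K.card = 3) → PSupp (greedyGo fuel x U rem) p := by
  intro fuel
  induction fuel with
  | zero =>
    intro x U rem hx _
    rw [greedyGo]
    split
    · exact hx
    · exact psupp_zero p
  | succ fuel ih =>
    intro x U rem hx hrem
    rw [greedyGo]
    split
    · exact hx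
    · cases hfind : rem.find? (fun K => (U ∩ K).card == 1) with
      | none => exact psupp_zero p
      | some K =>
        have hKmem : K ∈ rem := List.mem_of_find?_eq_some hfind
        exact ih (insMono x K) (U ∪ K) (rem.erase K)
          (psupp_insMono hx (hrem K hKmem))
          (fun K' hK' => hrem K' (List.mem_of_mem_erase hK'))

lemma psupp_jFam {b : ℕ} (L : List (Finset (Fin b)))
    (hL : ∀ K ∈ L, K.card = 3) : PSupp (jFam L) 1 := by
  cases L with
  | nil => rw [jFam]; exact psupp_zero 1
  | cons I rest =>
    rw [jFam]
    apply psupp_greedyGo 1 rest.length (eMono I) I rest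
    · intro S hS
      have hI : I.card = 3 := hL I List.mem_cons_self
      have := psupp_eMono I S hS
      omega
    · intro K hK; exact hL K (List.mem_cons_of_mem I hK)

lemma psupp_apow {b : ℕ} (a : Exterior b)
    (ha : ∀ S : Finset (Fin b), a S ≠ 0 → S.card = 3) (m : ℕ) :
    PSupp (apow a m) 1 := by
  unfold apow
  apply psupp_sum
  intro I _
  by_cases hprod : (∏ k : Fin m, a (I k)) = 0
  · rw [hprod, zero_smul]; exact psupp_zero 1
  · apply psupp_smul
    apply psupp_jFam
    intro K hK
    obtain ⟨k, hk⟩ := List.mem_ofFn.mp hK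
    have hak : a (I k) ≠ 0 := Finset.prod_ne_zero_iff.mp hprod k (Finset.mem_univ k)
    rw [← hk]
    exact ha (I k) hak

/-- For `a ∈ Λ³(ℤ^b)`, the sequence `K(a)_{2n+1} = a^{∘n}` is a
twisting sequence on the exterior algebra with zero differential: for every `n ≥ 2`,
`∑_{i+j=n, i,j ≥ 1} a^{∘i} ∧ a^{∘j} = 0` in `Λ^{2n+2}(ℤ^b)`. -/
theorem kraines_twisting_on_torus (b : ℕ) (a : Exterior b)
    (ha : ∀ S : Finset (Fin b), a S ≠ 0 → S.card = 3)
    (n : ℕ) (hn : 2 ≤ n) :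
    ∑ i ∈ Finset.Ioo 0 n, wedge (apow a i) (apow a (n - i)) = 0 := by
  have key : ∀ i ∈ Finset.Ioo 0 n,
      wedge (apow a i) (apow a (n - i)) + wedge (apow a (n - i)) (apow a (n - (n - i)))
        = 0 := by
    intro i hi
    obtain ⟨h1, h2⟩ := Finset.mem_Ioo.mp hi
    have hni : n - (n - i) = i := by omega
    rw [hni]
    rw [wedge_anticomm (psupp_apow a ha (n - i)) (psupp_apow a ha i)]
    ring
  refine Finset.sum_involution (fun i _ => n - i) key ?_ ?_ ?_
  · intro i hi hne heq
    apply hne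
    have := key i hi
    have heq' : n - i = i := heq
    simp only [heq'] at this ⊢
    funext S
    have h2 := congrFun this S
    simp only [Pi.add_apply, Pi.zero_apply] at h2
    show wedge (apow a i) (apow a i) S = (0 : Exterior b) S
    simp only [Pi.zero_apply]
    omega
  · intro i hi
    obtain ⟨h1, h2⟩ := Finset.mem_Ioo.mp hi
    show n - i ∈ Finset.Ioo 0 n
    exact Finset.mem_Ioo.mpr ⟨by omega, by omega⟩
  · intro i hi
    obtain ⟨h1, h2⟩ := Finset.mem_Ioo.mp hi
    show n - (n - i) = i
    omega
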